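/- Let A be a skew left brace. The commutator subgroup of Λ_{Aᵒᵖ} = (A,·) ⋊_{λᵒᵖ} (A,∘) equals A' ⋊_{λᵒᵖ} (A,∘)', where A' is the subgroup of (A,·) generated by all a·b·a⁻¹·b⁻¹ and all a·λ_b(a⁻¹) for a,b ∈ A, and (A,∘)' is the commutator subgroup of (A,∘). -/

import Mathlib

/-- A skew left brace: a type with a group structure `(A, *)` (the additive group,
written multiplicatively) and a second group structure `(A, ∘)` (given by `circ`),
satisfying `a ∘ (b * c) = (a ∘ b) * a⁻¹ * (a ∘ c)`. -/
class SkewLeftBrace (A : Type*) extends Group A where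
  circ : A → A → A
  circ_assoc : ∀ a b c : A, circ (circ a b) c = circ a (circ b c)
  one_circ : ∀ a : A, circ 1 a = a
  circ_one : ∀ a : A, circ a 1 = a
  cinv : A → A
  cinv_circ : ∀ a : A, circ (cinv a) a = 1
  compat : ∀ a b c : A, circ a (b * c) = circ a b * a⁻¹ * circ a c

namespace SkewLeftBrace

variable {A : Type*} [SkewLeftBrace A]

/-- Type synonym for `A` carrying the multiplicative group `(A, ∘)`. -/
def Circ (A : Type*) := A

def toCirc {A : Type*} : A → Circ A := fun a => a
def ofCirc {A : Type*} : Circ A → A := fun a => a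

instance Circ.instGroup : Group (Circ A) where
  mul a b := toCirc (circ (ofCirc a) (ofCirc b))
  one := toCirc 1
  inv a := toCirc (cinv (ofCirc a))
  mul_assoc a b c := circ_assoc (A := A) a b c
  one_mul a := one_circ (A := A) a
  mul_one a := circ_one (A := A) a
  inv_mul_cancel a := cinv_circ (A := A) a

/-- The lambda map `λ_a(b) = a⁻¹ * (a ∘ b)`. -/
def lam (a b : A) : A := a⁻¹ * circ a b

/-- The opposite lambda map `λᵒᵖ_a(b) = (a ∘ b) * a⁻¹`. -/
def lamOp (a b : A) : A := circ a b * a⁻¹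

lemma circ_cinv (a : A) : circ a (cinv a) = 1 := mul_inv_cancel (toCirc a)

lemma circ_inv (a b : A) : circ a b⁻¹ = a * (circ a b)⁻¹ * a := by
  have h := compat a b b⁻¹
  rw [mul_inv_cancel, circ_one] at h
  have h2 : circ a b * a⁻¹ * circ a b⁻¹ = a := h.symm
  calc circ a b⁻¹ = (circ a b * a⁻¹)⁻¹ * (circ a b * a⁻¹ * circ a b⁻¹) := by group
    _ = a * (circ a b)⁻¹ * a := by rw [h2]; group

/-- `λ_a` as an automorphism of `(A, *)`. -/
def lamEquiv (a : A) : A ≃* A where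
  toFun := lam a
  invFun b := circ (cinv a) (a * b)
  left_inv b := by
    show circ (cinv a) (a * (a⁻¹ * circ a b)) = b
    rw [mul_inv_cancel_left, ← circ_assoc, cinv_circ, one_circ]
  right_inv b := by
    show a⁻¹ * circ a (circ (cinv a) (a * b)) = b
    rw [← circ_assoc, circ_cinv, one_circ, inv_mul_cancel_left]
  map_mul' b c := by
    show a⁻¹ * circ a (b * c) = (a⁻¹ * circ a b) * (a⁻¹ * circ a c)
    rw [compat]; group

lemma lam_circ (a b c : A) : lam (circ a b) c = lam a (lam b c) := by
  unfold lam
  rw [circ_assoc, compat, circ_inv]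
  group

/-- The lambda map as a group homomorphism `(A, ∘) → Aut(A, *)`. -/
def lamHom : Circ A →* MulAut A where
  toFun a := lamEquiv (ofCirc a)
  map_one' := by
    ext b
    show lam (1 : A) b = b
    simp [lam, one_circ]
  map_mul' a b := by
    ext c
    rw [MulAut.mul_apply]
    exact lam_circ (ofCirc a) (ofCirc b) c

/-- `λᵒᵖ_a` as an automorphism of `(A, *)`. -/
def lamOpEquiv (a : A) : MulAut A := MulAut.conj a * lamEquiv a

lemma lamOpEquiv_apply (a b : A) : lamOpEquiv a b = lamOp a b := by
  show a * (a⁻¹ * circ a b) * a⁻¹ = circ a b * a⁻¹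
  group

lemma lamOp_circ (a b c : A) : lamOp (circ a b) c = lamOp a (lamOp b c) := by
  unfold lamOp
  rw [circ_assoc, compat, circ_inv]
  group

/-- The opposite lambda map as a group homomorphism `(A, ∘) → Aut(A, *)`. -/
def lamOpHom : Circ A →* MulAut A where
  toFun a := lamOpEquiv (ofCirc a)
  map_one' := by
    ext b
    rw [lamOpEquiv_apply]
    show circ (1 : A) b * (1 : A)⁻¹ = b
    rw [one_circ]; group
  map_mul' a b := by
    ext c
    rw [MulAut.mul_apply, lamOpEquiv_apply, lamOpEquiv_apply, lamOpEquiv_apply]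
    exact lamOp_circ (ofCirc a) (ofCirc b) c

/-- The group `Λ_{Aᵒᵖ} = (A,·) ⋊_{λᵒᵖ} (A,∘)`. -/
abbrev LambdaOp (A : Type*) [SkewLeftBrace A] := SemidirectProduct A (Circ A) lamOpHom

/-- The group `Λ_A = (A,·) ⋊_{λ} (A,∘)`. -/
abbrev Lambda (A : Type*) [SkewLeftBrace A] := SemidirectProduct A (Circ A) lamHom

/-- The skew brace commutator `A'`: the subgroup of `(A,·)` generated by all
`a*b*a⁻¹*b⁻¹` and all `a * λ_b(a⁻¹)`. -/
def braceCommutator (A : Type*) [SkewLeftBrace A] : Subgroup A :=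
  Subgroup.closure
    {x : A | (∃ a b : A, x = a * b * a⁻¹ * b⁻¹) ∨ (∃ a b : A, x = a * lam b a⁻¹)}

instance braceCommutator_normal : (braceCommutator A).Normal := by
  constructor
  intro x hx g
  have h1 : g * x * g⁻¹ * x⁻¹ ∈ braceCommutator A :=
    Subgroup.subset_closure (Or.inl ⟨g, x, rfl⟩)
  have h2 : g * x * g⁻¹ = (g * x * g⁻¹ * x⁻¹) * x := by group
  rw [h2]
  exact mul_mem h1 hx

/-- `Fix(λ) = {x : λ_a(x) = x for all a}`. -/
def fixLam (A : Type*) [SkewLeftBrace A] : Set A := {x | ∀ a, lam a x = x}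

/-- The annihilator `Ann(A) = Ker(λ) ∩ Z(A,·) ∩ Fix(λ)` as a set. -/
def annSet (A : Type*) [SkewLeftBrace A] : Set A :=
  {x | (∀ b, lam x b = b) ∧ (∀ a, a * x = x * a) ∧ (∀ a, lam a x = x)}

end SkewLeftBrace

open SkewLeftBrace

namespace SkewLeftBrace

variable {A : Type*} [SkewLeftBrace A]

lemma mem_bc_comm (a b : A) : a * b * a⁻¹ * b⁻¹ ∈ braceCommutator A :=
  Subgroup.subset_closure (Or.inl ⟨a, b, rfl⟩)

lemma mem_bc_lam (a b : A) : a * lam b a⁻¹ ∈ braceCommutator A :=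
  Subgroup.subset_closure (Or.inr ⟨a, b, rfl⟩)

lemma lam_mul (b x y : A) : lam b (x * y) = lam b x * lam b y :=
  map_mul (lamEquiv b) x y

lemma lam_inv' (b x : A) : lam b x⁻¹ = (lam b x)⁻¹ :=
  (lamEquiv b).toMonoidHom.map_inv x

lemma lam_mem (b : A) {x : A} (hx : x ∈ braceCommutator A) :
    lam b x ∈ braceCommutator A := by
  induction hx using Subgroup.closure_induction with
  | mem x hx =>
    rcases hx with ⟨a, c, rfl⟩ | ⟨a, c, rfl⟩
    · rw [lam_mul, lam_mul, lam_mul, lam_inv', lam_inv']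
      exact mem_bc_comm _ _
    · rw [lam_mul, ← lam_circ]
      have key : lam b a * lam (circ b c) a⁻¹ =
          (a * lam b a⁻¹)⁻¹ * (a * lam (circ b c) a⁻¹) := by
        rw [lam_inv' b a, lam_inv' (circ b c) a]; group
      rw [key]
      exact mul_mem (inv_mem (mem_bc_lam a b)) (mem_bc_lam a (circ b c))
  | one => simpa [lam, circ_one] using (braceCommutator A).one_mem
  | mul x y _ _ hx hy => rw [lam_mul]; exact mul_mem hx hy
  | inv x _ hx => rw [lam_inv']; exact inv_mem hx

lemma lamOp_one (b : A) : lamOp b (1 : A) = 1 := by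
  unfold lamOp; rw [circ_one]; group

lemma lamOp_eq_conj_lam (b x : A) : lamOp b x = b * lam b x * b⁻¹ := by
  unfold lamOp lam; group

lemma lamOp_mem (b : A) {x : A} (hx : x ∈ braceCommutator A) :
    lamOp b x ∈ braceCommutator A := by
  rw [lamOp_eq_conj_lam]
  exact (braceCommutator_normal).conj_mem _ (lam_mem b hx) b

/-- The quotient map `A → A / A'`. -/
noncomputable def qbc : A →* A ⧸ braceCommutator A := QuotientGroup.mk' _

lemma qbc_eq_one_iff (x : A) : qbc x = 1 ↔ x ∈ braceCommutator A :=
  QuotientGroup.eq_one_iff x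

lemma qbc_comm (x y : A) : qbc x * qbc y = qbc y * qbc x := by
  have h : qbc (x * y * x⁻¹ * y⁻¹) = 1 := (qbc_eq_one_iff _).mpr (mem_bc_comm x y)
  simp only [map_mul, map_inv] at h
  have := mul_eq_one_iff_eq_inv.mp h
  calc qbc x * qbc y = (qbc x * qbc y * (qbc x)⁻¹) * qbc x := by group
    _ = qbc y * qbc x := by rw [this]; group

lemma qbc_lam (b x : A) : qbc (lam b x) = qbc x := by
  have h : qbc (x * lam b x⁻¹) = 1 := (qbc_eq_one_iff _).mpr (mem_bc_lam x b)
  rw [lam_inv', map_mul, map_inv, mul_inv_eq_one] at h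
  exact h.symm

lemma qbc_lamOp (b x : A) : qbc (lamOp b x) = qbc x := by
  rw [lamOp_eq_conj_lam, map_mul, map_mul, map_inv, qbc_lam]
  calc qbc b * qbc x * (qbc b)⁻¹ = qbc x * qbc b * (qbc b)⁻¹ := by rw [qbc_comm b x]
    _ = qbc x := by group

lemma qbc_lamOpHom (b : Circ A) (x : A) : qbc ((lamOpHom b) x) = qbc x := by
  show qbc (lamOpEquiv (ofCirc b) x) = qbc x
  rw [lamOpEquiv_apply]
  exact qbc_lamOp _ x

/-- The subgroup `A' ⋊ (A,∘)'` of `Λ_{Aᵒᵖ}`. -/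
def bigS (A : Type*) [SkewLeftBrace A] : Subgroup (LambdaOp A) where
  carrier := {z | z.left ∈ braceCommutator A ∧ z.right ∈ commutator (Circ A)}
  one_mem' := by
    constructor
    · show (1 : LambdaOp A).left ∈ _
      rw [SemidirectProduct.one_left]; exact one_mem _
    · show (1 : LambdaOp A).right ∈ _
      rw [SemidirectProduct.one_right]; exact one_mem _
  mul_mem' := by
    rintro x y ⟨hx1, hx2⟩ ⟨hy1, hy2⟩
    constructor
    · rw [SemidirectProduct.mul_left]
      exact mul_mem hx1 (by
        have : (lamOpHom x.right) y.left = lamOp (ofCirc x.right) y.left := by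
          show lamOpEquiv (ofCirc x.right) y.left = _
          rw [lamOpEquiv_apply]
        rw [this]; exact lamOp_mem _ hy1)
    · rw [SemidirectProduct.mul_right]
      exact mul_mem hx2 hy2
  inv_mem' := by
    rintro x ⟨hx1, hx2⟩
    constructor
    · rw [SemidirectProduct.inv_left]
      have : (lamOpHom x.right⁻¹) x.left⁻¹ = lamOp (ofCirc x.right⁻¹) x.left⁻¹ := by
        show lamOpEquiv _ _ = _
        rw [lamOpEquiv_apply]
      rw [this]; exact lamOp_mem _ (inv_mem hx1)
    · rw [SemidirectProduct.inv_right]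
      exact inv_mem hx2

end SkewLeftBrace

open scoped commutatorElement

/-- the commutator subgroup of `Λ_{Aᵒᵖ}` is `A' ⋊_{λᵒᵖ} (A,∘)'`. -/
theorem commutator_lambdaOp_eq (A : Type*) [SkewLeftBrace A] :
    ∀ z : LambdaOp A, z ∈ commutator (LambdaOp A) ↔
      (z.left ∈ braceCommutator A ∧ z.right ∈ commutator (Circ A)) := by
  classical
  have lamOpHom_apply : ∀ (b : Circ A) (x : A), (lamOpHom b) x = lamOp (ofCirc b) x :=
    fun b x => lamOpEquiv_apply (ofCirc b) x
  -- forward inclusion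
  have forward : commutator (LambdaOp A) ≤ bigS A := by
    rw [commutator_def, Subgroup.commutator_le]
    intro g _ h _
    refine ⟨?_, ?_⟩
    · show (⁅g, h⁆).left ∈ braceCommutator A
      rw [← qbc_eq_one_iff]
      have expand : (⁅g, h⁆).left =
          g.left * (lamOpHom g.right) h.left *
            (lamOpHom (g.right * h.right)) ((lamOpHom g.right⁻¹) g.left⁻¹) *
            (lamOpHom (g.right * h.right * g.right⁻¹)) ((lamOpHom h.right⁻¹) h.left⁻¹) := by
        rw [commutatorElement_def]
        simp [SemidirectProduct.mul_left, SemidirectProduct.inv_left,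
          SemidirectProduct.mul_right, SemidirectProduct.inv_right, mul_assoc]
      rw [expand, map_mul, map_mul, map_mul, qbc_lamOpHom, qbc_lamOpHom, qbc_lamOpHom,
        qbc_lamOpHom, qbc_lamOpHom, map_inv, map_inv]
      have hc := qbc_comm g.left h.left
      have step : qbc g.left * qbc h.left * (qbc g.left)⁻¹ * (qbc h.left)⁻¹ =
          qbc h.left * qbc g.left * (qbc g.left)⁻¹ * (qbc h.left)⁻¹ := by rw [hc]
      rw [step]; group
    · show (⁅g, h⁆).right ∈ commutator (Circ A)
      have : (⁅g, h⁆).right = ⁅(SemidirectProduct.rightHom g), (SemidirectProduct.rightHom h)⁆ :=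
        map_commutatorElement SemidirectProduct.rightHom g h
      rw [this, commutator_def]
      exact Subgroup.commutator_mem_commutator (Subgroup.mem_top _) (Subgroup.mem_top _)
  -- braceCommutator A embeds via inl into the commutator subgroup
  have hD : braceCommutator A ≤
      (commutator (LambdaOp A)).comap (SemidirectProduct.inl (φ := lamOpHom)) := by
    rw [braceCommutator, Subgroup.closure_le]
    rintro x (⟨a, b, rfl⟩ | ⟨a, b, rfl⟩)
    · show SemidirectProduct.inl (a * b * a⁻¹ * b⁻¹) ∈ commutator (LambdaOp A)
      have e : a * b * a⁻¹ * b⁻¹ = ⁅a, b⁆ := rfl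
      rw [e, map_commutatorElement, commutator_def]
      exact Subgroup.commutator_mem_commutator (Subgroup.mem_top _) (Subgroup.mem_top _)
    · show SemidirectProduct.inl (a * lam b a⁻¹) ∈ commutator (LambdaOp A)
      have key : (⁅(SemidirectProduct.inl a : LambdaOp A),
          (SemidirectProduct.inr (toCirc b) : LambdaOp A)⁆)
          = SemidirectProduct.inl (a * lamOp b a⁻¹) := by
        ext
        · show _ = a * lamOp b a⁻¹
          rw [commutatorElement_def]
          simp [SemidirectProduct.mul_left, SemidirectProduct.inv_left,
            SemidirectProduct.mul_right, SemidirectProduct.inv_right,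
            SemidirectProduct.left_inl, SemidirectProduct.right_inl,
            SemidirectProduct.left_inr, SemidirectProduct.right_inr,
            lamOpHom_apply, ofCirc, lamOp_one]
          simp [toCirc, lamOp_one]
        · show _ = (1 : Circ A)
          rw [commutatorElement_def]
          simp [SemidirectProduct.mul_right, SemidirectProduct.inv_right,
            SemidirectProduct.right_inl, SemidirectProduct.right_inr]
      have hkey : SemidirectProduct.inl (a * lamOp b a⁻¹) ∈ commutator (LambdaOp A) := by
        rw [← key, commutator_def]
        exact Subgroup.commutator_mem_commutator (Subgroup.mem_top _) (Subgroup.mem_top _)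
      have e1 : a * lam b a⁻¹ =
          (a * b⁻¹ * a⁻¹ * b) * (b⁻¹ * (a * lamOp b a⁻¹) * b) := by
        rw [lamOp_eq_conj_lam]; group
      rw [e1, map_mul]
      refine mul_mem ?_ ?_
      · have e2 : a * b⁻¹ * a⁻¹ * b = ⁅a, b⁻¹⁆ := by rw [commutatorElement_def]; group
        rw [e2, map_commutatorElement, commutator_def]
        exact Subgroup.commutator_mem_commutator (Subgroup.mem_top _) (Subgroup.mem_top _)
      · have e3 : (SemidirectProduct.inl (b⁻¹ * (a * lamOp b a⁻¹) * b) : LambdaOp A) =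
            SemidirectProduct.inl b⁻¹ * SemidirectProduct.inl (a * lamOp b a⁻¹) *
              (SemidirectProduct.inl b⁻¹)⁻¹ := by
          rw [← map_inv, ← map_mul, ← map_mul]
          congr 1
          group
        rw [e3]
        exact (Subgroup.Normal.conj_mem inferInstance _ hkey _)
  intro z
  constructor
  · intro hz
    exact ⟨(forward hz).1, (forward hz).2⟩
  · rintro ⟨h1, h2⟩
    have hmap : commutator (Circ A) =
        Subgroup.map (SemidirectProduct.rightHom (φ := lamOpHom)) (commutator (LambdaOp A)) := by
      rw [commutator_def, commutator_def, Subgroup.map_commutator,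
        Subgroup.map_top_of_surjective _ SemidirectProduct.rightHom_surjective]
    rw [hmap] at h2
    obtain ⟨x, hx, hxr⟩ := h2
    have hxl : x.left ∈ braceCommutator A := (forward hx).1
    have hxright : x.right = z.right := hxr
    have hzl : z = SemidirectProduct.inl (z.left * x.left⁻¹) * x := by
      ext
      · simp [SemidirectProduct.mul_left, SemidirectProduct.left_inl,
          SemidirectProduct.right_inl, mul_assoc]
      · simp [SemidirectProduct.mul_right, SemidirectProduct.right_inl, hxright]
    rw [hzl]
    exact mul_mem (hD (mul_mem h1 (inv_mem hxl))) hx
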